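/- For normally distributed valuations with mean μ > 0 and variance σ², the function Ω(p) = 2p·e^{-(p-μ)²/(2σ²)} + (2 - p(p-μ)/σ²)·∫_p^∞ e^{-(t-μ)²/(2σ²)} dt is positive for all p > 0. -/

import Mathlib

open MeasureTheory

private lemma gauss_tendsto (μ σ : ℝ) (hσ : 0 < σ) :
    Filter.Tendsto (fun t : ℝ => -Real.exp (-(t - μ) ^ 2 / (2 * σ ^ 2)))
      Filter.atTop (nhds 0) := by
  rw [← neg_zero]
  apply Filter.Tendsto.neg
  apply Real.tendsto_exp_atBot.comp
  apply Filter.Tendsto.atBot_div_const (by positivity : (0:ℝ) < 2 * σ ^ 2)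
  apply Filter.tendsto_neg_atBot_iff.mpr
  exact (Filter.tendsto_pow_atTop (by norm_num)).comp
    (Filter.tendsto_atTop_add_const_right _ _ Filter.tendsto_id)

private lemma gauss_deriv (μ σ : ℝ) (hσ : 0 < σ) (x : ℝ) :
    HasDerivAt (fun t : ℝ => -Real.exp (-(t - μ) ^ 2 / (2 * σ ^ 2)))
      ((x - μ) / σ ^ 2 * Real.exp (-(x - μ) ^ 2 / (2 * σ ^ 2))) x := by
  have h1 : HasDerivAt (fun t : ℝ => -(t - μ) ^ 2 / (2 * σ ^ 2))
      (-(2 * (x - μ)) / (2 * σ ^ 2)) x := by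
    have : HasDerivAt (fun t : ℝ => -(t - μ) ^ 2) (-(2 * (x - μ))) x := by
      have := ((hasDerivAt_id x).sub_const μ).pow 2
      exact this.neg.congr_deriv (by norm_num [id])
    simpa using this.div_const (2 * σ ^ 2)
  have := (Real.hasDerivAt_exp _).comp x h1
  have h2 := this.neg
  refine h2.congr_deriv ?_
  have hσ2 : σ ^ 2 ≠ 0 := by positivity
  ring

private lemma gauss_tail_bound (μ σ p : ℝ) (hσ : 0 < σ) (hp : μ < p) :
    ∫ t in Set.Ioi p, Real.exp (-(t - μ) ^ 2 / (2 * σ ^ 2)) ≤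
      σ ^ 2 / (p - μ) * Real.exp (-(p - μ) ^ 2 / (2 * σ ^ 2)) := by
  have hpm : 0 < p - μ := by linarith
  have hσ2 : (0:ℝ) < σ ^ 2 := by positivity
  have hcont : ContinuousWithinAt (fun t : ℝ => -Real.exp (-(t - μ) ^ 2 / (2 * σ ^ 2)))
      (Set.Ici p) p :=
    (Continuous.continuousWithinAt (by fun_prop))
  have hderiv : ∀ x ∈ Set.Ioi p,
      HasDerivAt (fun t : ℝ => -Real.exp (-(t - μ) ^ 2 / (2 * σ ^ 2)))
        ((x - μ) / σ ^ 2 * Real.exp (-(x - μ) ^ 2 / (2 * σ ^ 2))) x :=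
    fun x _ => gauss_deriv μ σ hσ x
  have hnn : ∀ x ∈ Set.Ioi p,
      0 ≤ (x - μ) / σ ^ 2 * Real.exp (-(x - μ) ^ 2 / (2 * σ ^ 2)) := by
    intro x hx
    have : (0:ℝ) < x - μ := by simp only [Set.mem_Ioi] at hx; linarith
    positivity
  have htend := gauss_tendsto μ σ hσ
  have hint : IntegrableOn
      (fun x : ℝ => (x - μ) / σ ^ 2 * Real.exp (-(x - μ) ^ 2 / (2 * σ ^ 2)))
      (Set.Ioi p) volume :=
    integrableOn_Ioi_deriv_of_nonneg hcont hderiv hnn htend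
  have hval : ∫ x in Set.Ioi p, (x - μ) / σ ^ 2 * Real.exp (-(x - μ) ^ 2 / (2 * σ ^ 2)) =
      Real.exp (-(p - μ) ^ 2 / (2 * σ ^ 2)) := by
    rw [integral_Ioi_of_hasDerivAt_of_nonneg hcont hderiv hnn htend]
    ring
  -- integrability of the plain gaussian
  have hgint : IntegrableOn (fun t : ℝ => Real.exp (-(t - μ) ^ 2 / (2 * σ ^ 2)))
      (Set.Ioi p) volume := by
    apply Integrable.integrableOn
    have h := (integrable_exp_neg_mul_sq (b := 1 / (2 * σ ^ 2)) (by positivity)).comp_sub_right μ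
    convert h using 2 with t
    field_simp
  -- pointwise bound
  have hmono : ∫ t in Set.Ioi p, Real.exp (-(t - μ) ^ 2 / (2 * σ ^ 2)) ≤
      ∫ t in Set.Ioi p, σ ^ 2 / (p - μ) *
        ((t - μ) / σ ^ 2 * Real.exp (-(t - μ) ^ 2 / (2 * σ ^ 2))) := by
    apply setIntegral_mono_on hgint (hint.const_mul _) measurableSet_Ioi
    intro x hx
    simp only [Set.mem_Ioi] at hx
    have hxm : p - μ ≤ x - μ := by linarith
    have hE : 0 < Real.exp (-(x - μ) ^ 2 / (2 * σ ^ 2)) := Real.exp_pos _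
    rw [show σ ^ 2 / (p - μ) * ((x - μ) / σ ^ 2 * Real.exp (-(x - μ) ^ 2 / (2 * σ ^ 2)))
        = (x - μ) / (p - μ) * Real.exp (-(x - μ) ^ 2 / (2 * σ ^ 2)) by
      field_simp]
    nlinarith [(one_le_div hpm).mpr hxm, hE]
  calc ∫ t in Set.Ioi p, Real.exp (-(t - μ) ^ 2 / (2 * σ ^ 2)) ≤ _ := hmono
    _ = σ ^ 2 / (p - μ) * Real.exp (-(p - μ) ^ 2 / (2 * σ ^ 2)) := by
        rw [integral_const_mul, hval]

/-- For normal valuations with mean `μ > 0` and variance `σ²`, the function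
`Ω(p) = 2p e^{-(p-μ)²/(2σ²)} + (2 - p(p-μ)/σ²) ∫_p^∞ e^{-(t-μ)²/(2σ²)} dt`
is positive for all `p > 0`. -/
theorem omega_positive (μ σ : ℝ) (hμ : 0 < μ) (hσ : 0 < σ) :
    ∀ p > (0 : ℝ),
      0 < 2 * p * Real.exp (-(p - μ) ^ 2 / (2 * σ ^ 2)) +
          (2 - p * (p - μ) / σ ^ 2) *
            ∫ t in Set.Ioi p, Real.exp (-(t - μ) ^ 2 / (2 * σ ^ 2)) := by
  intro p hp
  have hE : 0 < Real.exp (-(p - μ) ^ 2 / (2 * σ ^ 2)) := Real.exp_pos _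
  have hσ2 : (0:ℝ) < σ ^ 2 := by positivity
  have hInn : 0 ≤ ∫ t in Set.Ioi p, Real.exp (-(t - μ) ^ 2 / (2 * σ ^ 2)) :=
    setIntegral_nonneg measurableSet_Ioi fun x _ => (Real.exp_pos _).le
  rcases le_or_gt 0 (2 - p * (p - μ) / σ ^ 2) with hc | hc
  · have : 0 < 2 * p * Real.exp (-(p - μ) ^ 2 / (2 * σ ^ 2)) := by positivity
    nlinarith [mul_nonneg hc hInn]
  · -- then p (p - μ) > 2 σ² > 0, and p > 0 forces μ < p
    have hpm : μ < p := by
      by_contra h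
      push_neg at h
      have h1 : p * (p - μ) ≤ 0 := mul_nonpos_of_nonneg_of_nonpos hp.le (by linarith)
      have h2 : p * (p - μ) / σ ^ 2 ≤ 0 := div_nonpos_of_nonpos_of_nonneg h1 hσ2.le
      linarith
    have hbound := gauss_tail_bound μ σ p hσ hpm
    have hpm' : 0 < p - μ := by linarith
    have hkey : (2 - p * (p - μ) / σ ^ 2) *
        (∫ t in Set.Ioi p, Real.exp (-(t - μ) ^ 2 / (2 * σ ^ 2))) ≥
        (2 - p * (p - μ) / σ ^ 2) *
        (σ ^ 2 / (p - μ) * Real.exp (-(p - μ) ^ 2 / (2 * σ ^ 2))) :=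
      mul_le_mul_of_nonpos_left hbound hc.le
    have hcalc : 2 * p * Real.exp (-(p - μ) ^ 2 / (2 * σ ^ 2)) +
        (2 - p * (p - μ) / σ ^ 2) *
        (σ ^ 2 / (p - μ) * Real.exp (-(p - μ) ^ 2 / (2 * σ ^ 2))) =
        (p + 2 * σ ^ 2 / (p - μ)) * Real.exp (-(p - μ) ^ 2 / (2 * σ ^ 2)) := by
      field_simp
      ring
    have hpos : 0 < (p + 2 * σ ^ 2 / (p - μ)) * Real.exp (-(p - μ) ^ 2 / (2 * σ ^ 2)) := by
      positivity
    linarith
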